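/- arXiv:0910.1831 — 2 statements merged into one kernel-verified Lean document; each statement's English description precedes it below -/
import Mathlib

section
/- (Alili–Doney identity, strict case) For a random walk Z_n with i.i.d. integer steps and z > 0, one has P(Z_n = z, Z_k > 0 for k = 1,...,n) = (1/n) · E[N^+(z) · 1{Z_n = z}], where N^+(z) counts the strict ascending ladder epochs m ≥ 0 at which Z_m < z. -/
open MeasureTheory ProbabilityTheory

open scoped Classical

section AuxiliaryAD


namespace AD

def vext (n : ℕ) (v : Fin n → ℤ) (i : ℕ) : ℤ := if h : i < n then v ⟨i, h⟩ else 0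

def PS (n : ℕ) (v : Fin n → ℤ) (k : ℕ) : ℤ := ∑ i ∈ Finset.range k, vext n v i

lemma PS_zero (n : ℕ) (v : Fin n → ℤ) : PS n v 0 = 0 := by simp [PS]

lemma PS_Ico {n : ℕ} (v : Fin n → ℤ) {a b : ℕ} (h : a ≤ b) :
    PS n v b = PS n v a + ∑ i ∈ Finset.Ico a b, vext n v i := by
  unfold PS
  rw [Finset.range_eq_Ico]
  rw [← Finset.sum_Ico_consecutive _ (Nat.zero_le a) h]
  rw [Finset.range_eq_Ico]

def gf (n m q i : ℕ) : ℕ :=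
  if i < n - q then i + q else if i < n - m then i + (m + q) - n else n - 1 - i

lemma gf_lt {n m q : ℕ} (hmq : m ≤ q) (hqn : q < n) {i : ℕ} (hi : i < n) :
    gf n m q i < n := by
  unfold gf; split_ifs <;> omega

lemma gf_inj {n m q : ℕ} (hmq : m ≤ q) (hqn : q < n) :
    Function.Injective (fun k : Fin n => gf n m q (k : ℕ)) := by
  intro a b h
  have ha := a.2; have hb := b.2
  simp only [gf] at h
  apply Fin.ext
  split_ifs at h <;> omega

def gv (n m q : ℕ) (v : Fin n → ℤ) : Fin n → ℤ := fun k => vext n v (gf n m q (k : ℕ))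

lemma vext_gv {n m q : ℕ} (v : Fin n → ℤ) {i : ℕ} (hi : i < n) :
    vext n (gv n m q v) i = vext n v (gf n m q i) := by
  simp [gv, vext, hi]

lemma PSw1 {n m q : ℕ} (v : Fin n → ℤ) (hmq : m ≤ q) (hqn : q < n) {k : ℕ} (hk : k ≤ n - q) :
    PS n (gv n m q v) k = PS n v (q + k) - PS n v q := by
  have h1 : PS n (gv n m q v) k = ∑ i ∈ Finset.range k, vext n v (i + q) := by
    unfold PS
    refine Finset.sum_congr rfl (fun i hi => ?_)
    have hik : i < k := Finset.mem_range.1 hi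
    rw [vext_gv v (by omega)]
    congr 1
    unfold gf
    rw [if_pos (by omega)]
  rw [h1, PS_Ico v (Nat.le_add_right q k), Finset.sum_Ico_eq_sum_range]
  have h2 : q + k - q = k := by omega
  rw [h2]
  have h3 : ∑ i ∈ Finset.range k, vext n v (q + i) = ∑ i ∈ Finset.range k, vext n v (i + q) :=
    Finset.sum_congr rfl (fun i _ => by rw [Nat.add_comm])
  rw [h3]; ring

lemma PSw2 {n m q : ℕ} (v : Fin n → ℤ) (hmq : m ≤ q) (hqn : q < n) {k : ℕ}
    (hk1 : n - q ≤ k) (hk2 : k ≤ n - m) :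
    PS n (gv n m q v) k = (PS n v n - PS n v q) + (PS n v (k + (m + q) - n) - PS n v m) := by
  have hstep : PS n (gv n m q v) k
      = PS n (gv n m q v) (n - q) + ∑ i ∈ Finset.Ico (n - q) k, vext n (gv n m q v) i :=
    PS_Ico _ hk1
  have hfirst : PS n (gv n m q v) (n - q) = PS n v n - PS n v q := by
    rw [PSw1 v hmq hqn (le_refl _)]
    congr 2
    omega
  have hsecond : ∑ i ∈ Finset.Ico (n - q) k, vext n (gv n m q v) i
      = ∑ i ∈ Finset.Ico (n - q) k, vext n v (i + (m + q) - n) := by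
    refine Finset.sum_congr rfl (fun i hi => ?_)
    obtain ⟨hi1, hi2⟩ := Finset.mem_Ico.1 hi
    rw [vext_gv v (by omega)]
    congr 1
    unfold gf
    rw [if_neg (by omega), if_pos (by omega)]
  have hthird : ∑ i ∈ Finset.Ico (n - q) k, vext n v (i + (m + q) - n)
      = PS n v (k + (m + q) - n) - PS n v m := by
    rw [Finset.sum_Ico_eq_sum_range]
    have hm : m ≤ k + (m + q) - n := by omega
    rw [PS_Ico v hm, Finset.sum_Ico_eq_sum_range]
    have h6 : k + (m + q) - n - m = k - (n - q) := by omega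
    rw [h6]
    have h4 : ∑ x ∈ Finset.range (k - (n - q)), vext n v (n - q + x + (m + q) - n)
        = ∑ x ∈ Finset.range (k - (n - q)), vext n v (m + x) :=
      Finset.sum_congr rfl (fun x _ => by congr 1; omega)
    rw [h4]; ring
  rw [hstep, hfirst, hsecond, hthird]

lemma PSw3 {n m q : ℕ} (v : Fin n → ℤ) (hmq : m ≤ q) (hqn : q < n) {k : ℕ}
    (hk1 : n - m ≤ k) (hk2 : k ≤ n) :
    PS n (gv n m q v) k = PS n v n - PS n v (n - k) := by
  have hstep : PS n (gv n m q v) k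
      = PS n (gv n m q v) (n - m) + ∑ i ∈ Finset.Ico (n - m) k, vext n (gv n m q v) i :=
    PS_Ico _ hk1
  have hfirst : PS n (gv n m q v) (n - m) = PS n v n - PS n v m := by
    rw [PSw2 v hmq hqn (by omega) (le_refl _)]
    have h7 : n - m + (m + q) - n = q := by omega
    rw [h7]; ring
  have hsecond : ∑ i ∈ Finset.Ico (n - m) k, vext n (gv n m q v) i
      = ∑ i ∈ Finset.Ico (n - k) m, vext n v i := by
    calc ∑ i ∈ Finset.Ico (n - m) k, vext n (gv n m q v) i
        = ∑ i ∈ Finset.Ico (n - m) k, vext n v (n - 1 - i) := by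
          refine Finset.sum_congr rfl (fun i hi => ?_)
          obtain ⟨h1, h2⟩ := Finset.mem_Ico.1 hi
          rw [vext_gv v (by omega)]
          congr 1
          unfold gf
          rw [if_neg (by omega), if_neg (by omega)]
      _ = ∑ i ∈ Finset.Ico (n - k) m, vext n v i := by
          refine Finset.sum_nbij' (fun a => n - 1 - a) (fun b => n - 1 - b) ?_ ?_ ?_ ?_ ?_
          · intro a ha; simp only [Finset.mem_Ico] at ha ⊢; omega
          · intro b hb; simp only [Finset.mem_Ico] at hb ⊢; omega
          · intro a ha; simp only [Finset.mem_Ico] at ha ⊢; omega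
          · intro b hb; simp only [Finset.mem_Ico] at hb ⊢; omega
          · intro a ha; rfl
  have hthird : ∑ i ∈ Finset.Ico (n - k) m, vext n v i = PS n v m - PS n v (n - k) := by
    rw [PS_Ico v (show n - k ≤ m by omega)]; ring
  rw [hstep, hfirst, hsecond, hthird]; ring

end AD

namespace AD

def Aprop (n : ℕ) (z : ℤ) (m : ℕ) (v : Fin n → ℤ) : Prop :=
  PS n v n = z ∧ PS n v m < z ∧ ∀ k < m, PS n v k < PS n v m

def Bprop (n : ℕ) (z : ℤ) (v : Fin n → ℤ) : Prop :=
  PS n v n = z ∧ ∀ k, 1 ≤ k → k ≤ n → 0 < PS n v k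

def Qprop (n m q : ℕ) (v : Fin n → ℤ) : Prop :=
  (∀ k, m ≤ k → k < q → PS n v q ≤ PS n v k) ∧ (∀ k, q < k → k ≤ n → PS n v q < PS n v k)

def Dprop (n d r : ℕ) (w : Fin n → ℤ) : Prop :=
  (∀ j, d < j → j ≤ n → PS n w d < PS n w j) ∧
  (∀ j, d - r ≤ j → j < d → PS n w d ≤ PS n w j)

theorem AQ_iff_BD {n : ℕ} {z : ℤ} {m q : ℕ} (hmq : m ≤ q) (hqn : q < n) (v : Fin n → ℤ) :
    (Aprop n z m v ∧ Qprop n m q v)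
      ↔ (Bprop n z (gv n m q v) ∧ Dprop n (n - m) (q - m) (gv n m q v)) := by
  have hS0 : PS n v 0 = 0 := PS_zero n v
  have hTn : PS n (gv n m q v) n = PS n v n := by
    rw [PSw3 v hmq hqn (by omega) (le_refl n)]
    simp [hS0]
  have hTd : PS n (gv n m q v) (n - m) = PS n v n - PS n v m := by
    rw [PSw3 v hmq hqn (le_refl _) (by omega)]
    congr 2
    omega
  constructor
  · rintro ⟨⟨hA1, hA2, hA3⟩, hQ1, hQ2⟩
    have hSm : PS n v m < PS n v n := by rw [hA1]; exact hA2
    refine ⟨⟨by rw [hTn, hA1], ?_⟩, ?_, ?_⟩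
    · -- positivity
      intro k hk1 hkn
      by_cases hc1 : k ≤ n - q
      · rw [PSw1 v hmq hqn hc1]
        have := hQ2 (q + k) (by omega) (by omega)
        linarith
      · by_cases hc2 : k ≤ n - m
        · rw [PSw2 v hmq hqn (by omega) hc2]
          set j := k + (m + q) - n with hj
          have hj1 : m ≤ j := by omega
          have hj2 : j ≤ q := by omega
          have hq : PS n v q ≤ PS n v j := by
            rcases eq_or_lt_of_le hj2 with h | h
            · rw [h]
            · exact hQ1 j hj1 h
          linarith
        · rw [PSw3 v hmq hqn (by omega) hkn]
          have hnk : n - k < m := by omega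
          have := hA3 (n - k) hnk
          linarith
    · -- D1 : future strict minimum at n - m
      intro j hj1 hj2
      rw [hTd, PSw3 v hmq hqn (by omega) hj2]
      have hnj : n - j < m := by omega
      have := hA3 (n - j) hnj
      linarith
    · -- D2
      intro j hj1 hj2
      have hj1' : n - q ≤ j := by omega
      rw [hTd, PSw2 v hmq hqn hj1' (by omega)]
      set j' := j + (m + q) - n with hj'
      have hj'1 : m ≤ j' := by omega
      have hj'2 : j' < q := by omega
      have := hQ1 j' hj'1 hj'2
      linarith
  · rintro ⟨⟨hB1, hB2⟩, hD1, hD2⟩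
    have hSn : PS n v n = z := by rw [← hTn]; exact hB1
    have hTdpos : 0 < PS n (gv n m q v) (n - m) := hB2 (n - m) (by omega) (by omega)
    have hA2 : PS n v m < z := by rw [← hSn]; linarith [hTd]
    have hA3 : ∀ k < m, PS n v k < PS n v m := by
      intro k hk
      have h1 : PS n (gv n m q v) (n - k) = PS n v n - PS n v k := by
        rw [PSw3 v hmq hqn (by omega) (by omega)]
        congr 2
        omega
      have h2 := hD1 (n - k) (by omega) (by omega)
      rw [hTd, h1] at h2
      linarith
    refine ⟨⟨hSn, hA2, hA3⟩, ?_, ?_⟩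
    · -- Q1
      intro k hk1 hk2
      set k'' := k + n - (m + q) with hk''
      have hb1 : n - q ≤ k'' := by omega
      have hb2 : k'' < n - m := by omega
      have h3 : PS n (gv n m q v) k'' = (PS n v n - PS n v q) + (PS n v k - PS n v m) := by
        rw [PSw2 v hmq hqn hb1 (by omega)]
        congr 3
        omega
      have h4 := hD2 k'' (by omega) hb2
      rw [hTd, h3] at h4
      linarith
    · -- Q2
      intro k hk1 hk2
      have h5 : PS n (gv n m q v) (k - q) = PS n v k - PS n v q := by
        rw [PSw1 v hmq hqn (by omega)]
        congr 2
        omega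
      have h6 := hB2 (k - q) (by omega) (by omega)
      rw [h5] at h6
      linarith

end AD

namespace AD

theorem Q_existsUnique {n : ℕ} {z : ℤ} {m : ℕ} (hmn : m < n) {v : Fin n → ℤ}
    (hA : Aprop n z m v) :
    ∃! q, m ≤ q ∧ q < n ∧ Qprop n m q v := by
  obtain ⟨hA1, hA2, _⟩ := hA
  -- pick the largest minimizer of PS on [m, n]
  obtain ⟨k₀, hk₀mem, hk₀min⟩ :=
    Finset.exists_min_image (Finset.Icc m n) (PS n v) ⟨m, Finset.mem_Icc.2 ⟨le_refl m, by omega⟩⟩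
  have hfilne : ((Finset.Icc m n).filter (fun k => PS n v k ≤ PS n v k₀)).Nonempty :=
    ⟨k₀, Finset.mem_filter.2 ⟨hk₀mem, le_refl _⟩⟩
  have hqmem := Finset.max'_mem _ hfilne
  rw [Finset.mem_filter, Finset.mem_Icc] at hqmem
  set q := ((Finset.Icc m n).filter (fun k => PS n v k ≤ PS n v k₀)).max' hfilne with hqdef
  obtain ⟨⟨hqm, hqn'⟩, hqmin⟩ := hqmem
  have hmin : ∀ j, m ≤ j → j ≤ n → PS n v q ≤ PS n v j := by
    intro j h1 h2
    exact le_trans hqmin (hk₀min j (Finset.mem_Icc.2 ⟨h1, h2⟩))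
  have hqn : q < n := by
    rcases eq_or_lt_of_le hqn' with h | h
    · exfalso
      have h1 := hmin m (le_refl m) (by omega)
      rw [h, hA1] at h1
      linarith
    · exact h
  have hQ2 : ∀ k, q < k → k ≤ n → PS n v q < PS n v k := by
    intro k h1 h2
    rcases lt_or_ge (PS n v q) (PS n v k) with h | h
    · exact h
    · exfalso
      have hkmem : k ∈ (Finset.Icc m n).filter (fun k => PS n v k ≤ PS n v k₀) :=
        Finset.mem_filter.2 ⟨Finset.mem_Icc.2 ⟨by omega, h2⟩, le_trans h hqmin⟩
      have hle := Finset.le_max' _ k hkmem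
      rw [← hqdef] at hle
      omega
  refine ⟨q, ⟨hqm, hqn, (fun k h1 h2 => hmin k h1 (by omega)), hQ2⟩, ?_⟩
  rintro q' ⟨hq'm, hq'n, hQ'1, hQ'2⟩
  by_contra hne
  rcases lt_or_gt_of_ne hne with h | h
  · -- q' < q
    have h1 := hQ'2 q h (by omega)
    have h2 := hmin q' hq'm (by omega)
    omega
  · -- q < q'
    have h1 := hQ2 q' h (by omega)
    have h2 := hQ'1 q hqm h
    omega

theorem BD_count {n : ℕ} {z : ℤ} {w : Fin n → ℤ} (hB : Bprop n z w) :
    ∑ m ∈ Finset.range n, ∑ q ∈ Finset.Ico m n,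
      (if Dprop n (n - m) (q - m) w then (1 : ENNReal) else 0) = n := by
  obtain ⟨hB1, hB2⟩ := hB
  -- rewrite inner sums
  have hinner : ∀ m, ∑ q ∈ Finset.Ico m n, (if Dprop n (n - m) (q - m) w then (1 : ENNReal) else 0)
      = ∑ r ∈ Finset.range (n - m), (if Dprop n (n - m) r w then (1 : ENNReal) else 0) := by
    intro m
    rw [Finset.sum_Ico_eq_sum_range]
    refine Finset.sum_congr rfl (fun r _ => ?_)
    have : m + r - m = r := by omega
    rw [this]
  -- telescoping claim
  have claim : ∀ d, d ≤ n →
      (d = 0 ∨ ∀ j, d < j → j ≤ n → PS n w d < PS n w j) →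
      ∑ d' ∈ Finset.Ioc 0 d, (∑ r ∈ Finset.range d',
        (if Dprop n d' r w then (1 : ENNReal) else 0)) = d := by
    intro d
    induction d using Nat.strong_induction_on with
    | _ d IH =>
      intro hdn hfm
      rcases hfm with rfl | hfm
      · simp
      by_cases hd0 : d = 0
      · simp [hd0]
      have hd1 : 1 ≤ d := by omega
      have hwd : 0 < PS n w d := hB2 d hd1 hdn
      -- largest index below d with strictly smaller value
      have hflt : ((Finset.range d).filter (fun j => PS n w j < PS n w d)).Nonempty :=
        ⟨0, Finset.mem_filter.2 ⟨Finset.mem_range.2 (by omega), by rw [PS_zero]; exact hwd⟩⟩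
      have hLmem := Finset.max'_mem _ hflt
      rw [Finset.mem_filter, Finset.mem_range] at hLmem
      set L := ((Finset.range d).filter (fun j => PS n w j < PS n w d)).max' hflt with hLdef
      obtain ⟨hLd, hLval⟩ := hLmem
      have hf1 : ∀ j, L < j → j < d → PS n w d ≤ PS n w j := by
        intro j h1 h2
        rcases le_or_gt (PS n w d) (PS n w j) with h | h
        · exact h
        · exfalso
          have hjmem : j ∈ (Finset.range d).filter (fun j => PS n w j < PS n w d) :=
            Finset.mem_filter.2 ⟨Finset.mem_range.2 h2, h⟩
          have hle := Finset.le_max' _ j hjmem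
          rw [← hLdef] at hle
          omega
      -- inner count at d equals d - L
      have hcnt : ∑ r ∈ Finset.range d, (if Dprop n d r w then (1 : ENNReal) else 0)
          = (d - L : ℕ) := by
        have hiff : ∀ r ∈ Finset.range d, (Dprop n d r w ↔ r < d - L) := by
          intro r hr
          rw [Finset.mem_range] at hr
          constructor
          · rintro ⟨_, hD2⟩
            by_contra hcon
            have h1 : d - r ≤ L := by omega
            have := hD2 L h1 hLd
            omega
          · intro hrL
            refine ⟨hfm, fun j h1 h2 => hf1 j (by omega) h2⟩
        calc ∑ r ∈ Finset.range d, (if Dprop n d r w then (1 : ENNReal) else 0)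
            = ∑ r ∈ Finset.range d, (if r < d - L then (1 : ENNReal) else 0) :=
              Finset.sum_congr rfl (fun r hr => by
                rw [if_congr (hiff r hr) rfl rfl])
          _ = ∑ r ∈ Finset.range (d - L), (if r < d - L then (1 : ENNReal) else 0) :=
              (Finset.sum_subset (Finset.range_subset_range.2 (by omega))
                (fun x _ hx => by rw [Finset.mem_range] at hx; rw [if_neg (by omega)])).symm
          _ = ∑ r ∈ Finset.range (d - L), 1 :=
              Finset.sum_congr rfl (fun r hr => by
                rw [Finset.mem_range] at hr; rw [if_pos hr])
          _ = (d - L : ℕ) := by rw [Finset.sum_const, Finset.card_range]; simp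
      -- middle terms vanish
      have hmid : ∑ d' ∈ Finset.Ioc L (d - 1), (∑ r ∈ Finset.range d',
          (if Dprop n d' r w then (1 : ENNReal) else 0)) = 0 := by
        refine Finset.sum_eq_zero (fun d' hd' => ?_)
        rw [Finset.mem_Ioc] at hd'
        refine Finset.sum_eq_zero (fun r _ => ?_)
        rw [if_neg]
        rintro ⟨hD1, _⟩
        have h1 := hD1 d (by omega) hdn
        have h2 := hf1 d' hd'.1 (by omega)
        omega
      -- split the sum
      have hsplit1 : (∑ d' ∈ Finset.Ioc 0 L, (∑ r ∈ Finset.range d',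
            (if Dprop n d' r w then (1 : ENNReal) else 0)))
          + (∑ d' ∈ Finset.Ioc L d, (∑ r ∈ Finset.range d',
            (if Dprop n d' r w then (1 : ENNReal) else 0)))
          = ∑ d' ∈ Finset.Ioc 0 d, (∑ r ∈ Finset.range d',
            (if Dprop n d' r w then (1 : ENNReal) else 0)) :=
        Finset.sum_Ioc_consecutive _ (by omega) (by omega)
      have hsplit2 : (∑ d' ∈ Finset.Ioc L (d - 1), (∑ r ∈ Finset.range d',
            (if Dprop n d' r w then (1 : ENNReal) else 0)))
          + (∑ d' ∈ Finset.Ioc (d - 1) d, (∑ r ∈ Finset.range d',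
            (if Dprop n d' r w then (1 : ENNReal) else 0)))
          = ∑ d' ∈ Finset.Ioc L d, (∑ r ∈ Finset.range d',
            (if Dprop n d' r w then (1 : ENNReal) else 0)) :=
        Finset.sum_Ioc_consecutive _ (by omega) (by omega)
      have hsing : Finset.Ioc (d - 1) d = {d} := by
        ext x; simp only [Finset.mem_Ioc, Finset.mem_singleton]; omega
      have hLsum : ∑ d' ∈ Finset.Ioc 0 L, (∑ r ∈ Finset.range d',
          (if Dprop n d' r w then (1 : ENNReal) else 0)) = L := by
        rcases Nat.eq_zero_or_pos L with h | h
        · simp [h]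
        · exact IH L (by omega) (by omega) (Or.inr (fun j h1 h2 => by
            rcases lt_trichotomy j d with hc | hc | hc
            · exact lt_of_lt_of_le hLval (hf1 j h1 hc)
            · rw [hc]; exact hLval
            · exact lt_trans hLval (hfm j hc h2)))
      rw [← hsplit1, ← hsplit2, hsing, Finset.sum_singleton, hLsum, hmid, hcnt]
      rw [zero_add]
      rw [← Nat.cast_add]
      congr 1
      omega
  calc ∑ m ∈ Finset.range n, ∑ q ∈ Finset.Ico m n,
        (if Dprop n (n - m) (q - m) w then (1 : ENNReal) else 0)
      = ∑ m ∈ Finset.range n, ∑ r ∈ Finset.range (n - m),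
        (if Dprop n (n - m) r w then (1 : ENNReal) else 0) :=
        Finset.sum_congr rfl (fun m _ => hinner m)
    _ = ∑ d ∈ Finset.Ioc 0 n, ∑ r ∈ Finset.range d,
        (if Dprop n d r w then (1 : ENNReal) else 0) := by
        refine Finset.sum_nbij' (fun m => n - m) (fun d => n - d) ?_ ?_ ?_ ?_ ?_
        · intro a ha; simp only [Finset.mem_range] at ha; simp only [Finset.mem_Ioc]; omega
        · intro b hb; simp only [Finset.mem_Ioc] at hb; simp only [Finset.mem_range]; omega
        · intro a ha; simp only [Finset.mem_range] at ha; show n - (n - a) = a; omega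
        · intro b hb; simp only [Finset.mem_Ioc] at hb; show n - (n - b) = b; omega
        · intro a _; rfl
    _ = n := claim n (le_refl n) (Or.inr (fun j h1 h2 => absurd (lt_of_lt_of_le h1 h2) (lt_irrefl n)))

end AD

namespace AD

variable {Ω : Type*} [MeasurableSpace Ω] (μ : Measure Ω) [IsProbabilityMeasure μ]
variable (ξ : ℕ → Ω → ℤ)

/-- the joint law of an injectively-indexed subfamily of an iid family, on atoms -/
lemma atom_measure (hmeas : ∀ k, Measurable (ξ k))
    (hindep : iIndepFun ξ μ)
    (hident : ∀ k, μ.map (ξ k) = μ.map (ξ 0)) (n : ℕ)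
    (σ : Fin n → ℕ) (hσ : Function.Injective σ) (f₀ : Fin n → ℤ) :
    μ {ω | ∀ k : Fin n, ξ (σ k) ω = f₀ k} = ∏ k : Fin n, (μ.map (ξ 0)) {f₀ k} := by
  classical
  set sets : ℕ → Set ℤ := fun i => {x | ∀ k, σ k = i → x = f₀ k} with hsets
  set J : Finset ℕ := Finset.univ.image σ with hJ
  have hseteq : {ω | ∀ k : Fin n, ξ (σ k) ω = f₀ k} = ⋂ i ∈ J, ξ i ⁻¹' sets i := by
    ext ω
    simp only [Set.mem_setOf_eq, Set.mem_iInter, Set.mem_preimage, hsets, hJ,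
      Finset.mem_image, Finset.mem_univ, true_and]
    constructor
    · rintro h i ⟨k₁, rfl⟩ k hk
      rw [← hk]
      exact h k
    · intro h k
      exact h (σ k) ⟨k, rfl⟩ k rfl
  have hprod := hindep.measure_inter_preimage_eq_mul J
    (sets := sets) (fun i _ => MeasurableSet.of_discrete)
  rw [hseteq, hprod, hJ, Finset.prod_image (fun k _ k' _ h => hσ h)]
  refine Finset.prod_congr rfl (fun k _ => ?_)
  have hone : sets (σ k) = {f₀ k} := by
    ext x
    simp only [hsets, Set.mem_setOf_eq, Set.mem_singleton_iff]
    constructor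
    · intro h; exact h k rfl
    · intro h k' hk'; rw [h]; exact congrArg f₀ (hσ hk') ▸ rfl
  rw [hone, ← Measure.map_apply (hmeas (σ k)) MeasurableSet.of_discrete, hident (σ k)]

lemma law_invariance (hmeas : ∀ k, Measurable (ξ k))
    (hindep : iIndepFun ξ μ)
    (hident : ∀ k, μ.map (ξ k) = μ.map (ξ 0)) (n : ℕ)
    (σ : Fin n → ℕ) (hσ : Function.Injective σ) (S : Set (Fin n → ℤ)) :
    μ {ω | (fun k : Fin n => ξ (σ k) ω) ∈ S} = μ {ω | (fun k : Fin n => ξ (k : ℕ) ω) ∈ S} := by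
  have hmV : ∀ τ : Fin n → ℕ, Measurable (fun ω (k : Fin n) => ξ (τ k) ω) :=
    fun τ => measurable_pi_lambda _ (fun k => hmeas (τ k))
  have hmap : ∀ τ : Fin n → ℕ, Function.Injective τ →
      μ.map (fun ω (k : Fin n) => ξ (τ k) ω)
        = μ.map (fun ω (k : Fin n) => ξ ((k : ℕ)) ω) := by
    intro τ hτ
    apply MeasureTheory.Measure.ext_of_singleton
    intro f₀
    rw [Measure.map_apply (hmV τ) MeasurableSet.of_discrete,
      Measure.map_apply (hmV (fun k => (k : ℕ))) MeasurableSet.of_discrete]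
    have h1 : (fun ω (k : Fin n) => ξ (τ k) ω) ⁻¹' {f₀} = {ω | ∀ k : Fin n, ξ (τ k) ω = f₀ k} := by
      ext ω
      simp [Set.mem_preimage, funext_iff]
    have h2 : (fun ω (k : Fin n) => ξ ((k : ℕ)) ω) ⁻¹' {f₀}
        = {ω | ∀ k : Fin n, ξ ((k : ℕ)) ω = f₀ k} := by
      ext ω
      simp [Set.mem_preimage, funext_iff]
    rw [h1, h2, atom_measure μ ξ hmeas hindep hident n τ hτ f₀,
      atom_measure μ ξ hmeas hindep hident n (fun k => (k : ℕ)) Fin.val_injective f₀]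
  have e1 : {ω | (fun k : Fin n => ξ (σ k) ω) ∈ S}
      = (fun ω (k : Fin n) => ξ (σ k) ω) ⁻¹' S := rfl
  have e2 : {ω | (fun k : Fin n => ξ ((k : ℕ)) ω) ∈ S}
      = (fun ω (k : Fin n) => ξ ((k : ℕ)) ω) ⁻¹' S := rfl
  rw [e1, e2, ← Measure.map_apply (hmV σ) MeasurableSet.of_discrete,
    ← Measure.map_apply (hmV (fun k => (k : ℕ))) MeasurableSet.of_discrete,
    hmap σ hσ]

end AD

end AuxiliaryAD

/-- Alili–Doney identity, strict case:
`P(Z_n = z, Z_1,…,Z_n > 0) = (1/n) E[N⁺(z) ; Z_n = z]`, where `N⁺(z)` is the number of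
strict ascending ladder epochs `m ≥ 0` with `Z_m < z`. -/
theorem stmt2 {Ω : Type*} [MeasurableSpace Ω] (μ : Measure Ω) [IsProbabilityMeasure μ]
    (ξ : ℕ → Ω → ℤ) (hmeas : ∀ k, Measurable (ξ k))
    (hindep : iIndepFun ξ μ)
    (hident : ∀ k, μ.map (ξ k) = μ.map (ξ 0))
    (Z : ℕ → Ω → ℤ) (hZ : ∀ n ω, Z n ω = ∑ k ∈ Finset.range n, ξ k ω)
    (Nplus : ℤ → Ω → ℕ)
    (hN : ∀ z ω, Nplus z ω
        = Set.ncard {m : ℕ | Z m ω < z ∧ ∀ k < m, Z k ω < Z m ω})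
    (n : ℕ) (hn : 1 ≤ n) (z : ℤ) (hz : 0 < z) :
    (μ {ω | Z n ω = z ∧ ∀ k, 1 ≤ k → k ≤ n → 0 < Z k ω}).toReal
      = (1 / n) * ∫ ω in {ω | Z n ω = z}, (Nplus z ω : ℝ) ∂μ := by

  classical
  set V : Ω → (Fin n → ℤ) := fun ω k => ξ (k : ℕ) ω with hV
  have hVmeas : Measurable V := measurable_pi_lambda _ (fun k => hmeas _)
  have hmeasSet : ∀ S : Set (Fin n → ℤ), MeasurableSet (V ⁻¹' S) :=
    fun S => hVmeas MeasurableSet.of_discrete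
  have hPSV : ∀ ω k, k ≤ n → AD.PS n (V ω) k = Z k ω := by
    intro ω k hk
    rw [hZ]
    refine Finset.sum_congr rfl (fun i hi => ?_)
    rw [Finset.mem_range] at hi
    have hin : i < n := by omega
    show AD.vext n (V ω) i = ξ i ω
    rw [AD.vext, dif_pos hin]
  set EB : Set Ω := V ⁻¹' {v | AD.Bprop n z v} with hEB
  set EA : ℕ → Set Ω := fun m => V ⁻¹' {v | AD.Aprop n z m v} with hEA
  set EAQ : ℕ → ℕ → Set Ω :=
    fun m q => V ⁻¹' {v | AD.Aprop n z m v ∧ AD.Qprop n m q v} with hEAQ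
  set EBD : ℕ → ℕ → Set Ω :=
    fun m q => V ⁻¹' {v | AD.Bprop n z v ∧ AD.Dprop n (n - m) (q - m) v} with hEBD
  -- Step 1: split A-events according to the last argmin
  have step1 : ∀ m ∈ Finset.range n, μ (EA m) = ∑ q ∈ Finset.Ico m n, μ (EAQ m q) := by
    intro m hm
    rw [Finset.mem_range] at hm
    have hcover : EA m = ⋃ q ∈ Finset.Ico m n, EAQ m q := by
      ext ω
      simp only [hEA, hEAQ, Set.mem_preimage, Set.mem_setOf_eq, Set.mem_iUnion,
        Finset.mem_Ico, exists_prop]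
      constructor
      · intro hA
        obtain ⟨q, ⟨hq1, hq2, hq3⟩, _⟩ := AD.Q_existsUnique hm hA
        exact ⟨q, ⟨hq1, hq2⟩, hA, hq3⟩
      · rintro ⟨q, _, hA, _⟩
        exact hA
    have hdisj : Set.Pairwise ↑(Finset.Ico m n) (Function.onFun Disjoint (EAQ m)) := by
      intro q1 hq1 q2 hq2 hne
      simp only [Finset.coe_Ico, Set.mem_Ico] at hq1 hq2
      simp only [Function.onFun]
      rw [Set.disjoint_left]
      intro ω hω1 hω2
      simp only [hEAQ, Set.mem_preimage, Set.mem_setOf_eq] at hω1 hω2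
      obtain ⟨q', hq', huniq⟩ := AD.Q_existsUnique (by omega : m < n) hω1.1
      exact hne ((huniq q1 ⟨hq1.1, hq1.2, hω1.2⟩).trans (huniq q2 ⟨hq2.1, hq2.2, hω2.2⟩).symm)
    rw [hcover]
    exact measure_biUnion_finset hdisj (fun q _ => hmeasSet _)
  -- Step 2: surgery, per (m,q)
  have step2 : ∀ m q, m ≤ q → q < n → μ (EAQ m q) = μ (EBD m q) := by
    intro m q hmq hqn
    have hgv : ∀ ω, AD.gv n m q (V ω) = fun k : Fin n => ξ (AD.gf n m q (k : ℕ)) ω := by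
      intro ω
      funext k
      show AD.vext n (V ω) (AD.gf n m q (k : ℕ)) = _
      rw [AD.vext, dif_pos (AD.gf_lt hmq hqn k.2)]
    have hset : EAQ m q = {ω | (fun k : Fin n => ξ (AD.gf n m q (k : ℕ)) ω) ∈
        {v | AD.Bprop n z v ∧ AD.Dprop n (n - m) (q - m) v}} := by
      ext ω
      simp only [hEAQ, Set.mem_preimage, Set.mem_setOf_eq]
      rw [AD.AQ_iff_BD hmq hqn (V ω), hgv ω]
    rw [hset, AD.law_invariance μ ξ hmeas hindep hident n _ (AD.gf_inj hmq hqn)]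
    rfl
  -- Step 3: count the surgered events
  have step3 : ∑ m ∈ Finset.range n, ∑ q ∈ Finset.Ico m n, μ (EBD m q)
      = (n : ENNReal) * μ EB := by
    have h1 : ∀ m ∈ Finset.range n, ∑ q ∈ Finset.Ico m n, μ (EBD m q)
        = ∫⁻ ω, (∑ q ∈ Finset.Ico m n,
            Set.indicator (EBD m q) (fun _ => (1 : ENNReal)) ω) ∂μ := by
      intro m _
      calc ∑ q ∈ Finset.Ico m n, μ (EBD m q)
          = ∑ q ∈ Finset.Ico m n,
              ∫⁻ ω, Set.indicator (EBD m q) (fun _ => (1 : ENNReal)) ω ∂μ :=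
            Finset.sum_congr rfl
              (fun q _ => (MeasureTheory.lintegral_indicator_one (hmeasSet _)).symm)
        _ = _ := (MeasureTheory.lintegral_finset_sum _
              (fun q _ => measurable_one.indicator (hmeasSet _))).symm
    have hpt : ∀ ω, (∑ m ∈ Finset.range n, ∑ q ∈ Finset.Ico m n,
        Set.indicator (EBD m q) (fun _ => (1 : ENNReal)) ω)
        = (n : ENNReal) * Set.indicator EB (fun _ => (1 : ENNReal)) ω := by
      intro ω
      by_cases hB : ω ∈ EB
      · rw [Set.indicator_of_mem hB, mul_one]
        have hBp : AD.Bprop n z (V ω) := hB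
        have heach : ∀ m q, Set.indicator (EBD m q) (fun _ => (1 : ENNReal)) ω
            = if AD.Dprop n (n - m) (q - m) (V ω) then (1 : ENNReal) else 0 := by
          intro m q
          rw [Set.indicator_apply]
          refine if_congr ?_ rfl rfl
          simp only [hEBD, Set.mem_preimage, Set.mem_setOf_eq]
          exact ⟨fun h => h.2, fun h => ⟨hBp, h⟩⟩
        calc ∑ m ∈ Finset.range n, ∑ q ∈ Finset.Ico m n,
              Set.indicator (EBD m q) (fun _ => (1 : ENNReal)) ω
            = ∑ m ∈ Finset.range n, ∑ q ∈ Finset.Ico m n,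
              (if AD.Dprop n (n - m) (q - m) (V ω) then (1 : ENNReal) else 0) :=
              Finset.sum_congr rfl (fun m _ => Finset.sum_congr rfl (fun q _ => heach m q))
          _ = (n : ENNReal) := AD.BD_count hBp
      · rw [Set.indicator_of_notMem hB, mul_zero]
        refine Finset.sum_eq_zero (fun m _ => Finset.sum_eq_zero (fun q _ => ?_))
        refine Set.indicator_of_notMem (fun hc => hB ?_) _
        exact hc.1
    calc ∑ m ∈ Finset.range n, ∑ q ∈ Finset.Ico m n, μ (EBD m q)
        = ∑ m ∈ Finset.range n, ∫⁻ ω, (∑ q ∈ Finset.Ico m n,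
            Set.indicator (EBD m q) (fun _ => (1 : ENNReal)) ω) ∂μ :=
          Finset.sum_congr rfl h1
      _ = ∫⁻ ω, ∑ m ∈ Finset.range n, (∑ q ∈ Finset.Ico m n,
            Set.indicator (EBD m q) (fun _ => (1 : ENNReal)) ω) ∂μ :=
          (MeasureTheory.lintegral_finset_sum _ (fun m _ => Finset.measurable_sum _
            (fun q _ => measurable_one.indicator (hmeasSet _)))).symm
      _ = ∫⁻ ω, (n : ENNReal) * Set.indicator EB (fun _ => (1 : ENNReal)) ω ∂μ :=
          lintegral_congr hpt
      _ = (n : ENNReal) * ∫⁻ ω, Set.indicator EB (fun _ => (1 : ENNReal)) ω ∂μ :=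
          MeasureTheory.lintegral_const_mul _ (measurable_one.indicator (hmeasSet _))
      _ = (n : ENNReal) * μ EB := by
          congr 1
          exact MeasureTheory.lintegral_indicator_one (hmeasSet _)
  have key : ∑ m ∈ Finset.range n, μ (EA m) = (n : ENNReal) * μ EB := by
    rw [Finset.sum_congr rfl step1, ← step3]
    refine Finset.sum_congr rfl (fun m hm => Finset.sum_congr rfl (fun q hq => ?_))
    rw [Finset.mem_range] at hm
    rw [Finset.mem_Ico] at hq
    exact step2 m q hq.1 hq.2
  -- Bochner side
  have hEevent : {ω | Z n ω = z} = V ⁻¹' {v | AD.PS n v n = z} := by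
    ext ω
    simp only [Set.mem_setOf_eq, Set.mem_preimage, hPSV ω n (le_refl n)]
  have hEmeas : MeasurableSet {ω | Z n ω = z} := by rw [hEevent]; exact hmeasSet _
  have hintrw : ∫ ω in {ω | Z n ω = z}, (Nplus z ω : ℝ) ∂μ
      = ∑ m ∈ Finset.range n, (μ (EA m)).toReal := by
    rw [← MeasureTheory.integral_indicator hEmeas]
    have hptwise : Set.indicator {ω | Z n ω = z} (fun ω => (Nplus z ω : ℝ))
        = fun ω => ∑ m ∈ Finset.range n, Set.indicator (EA m) (fun _ => (1 : ℝ)) ω := by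
      funext ω
      by_cases hE : Z n ω = z
      · have hmem : ω ∈ {ω | Z n ω = z} := hE
        rw [Set.indicator_of_mem hmem]
        have hseteq : {m : ℕ | Z m ω < z ∧ ∀ k < m, Z k ω < Z m ω}
            = ↑((Finset.range n).filter (fun m => Z m ω < z ∧ ∀ k < m, Z k ω < Z m ω)) := by
          ext m
          simp only [Set.mem_setOf_eq, Finset.coe_filter, Finset.mem_range]
          constructor
          · rintro ⟨h1, h2⟩
            refine ⟨?_, h1, h2⟩
            by_contra hcon
            push_neg at hcon
            rcases eq_or_lt_of_le hcon with h | h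
            · rw [← h, hE] at h1
              exact absurd h1 (lt_irrefl z)
            · have h3 := h2 n h
              rw [hE] at h3
              exact absurd (h3.trans h1) (lt_irrefl z)
          · rintro ⟨_, h1, h2⟩
            exact ⟨h1, h2⟩
        rw [hN z ω, hseteq, Set.ncard_coe_finset, Finset.card_filter]
        push_cast
        refine Finset.sum_congr rfl (fun m hm => ?_)
        rw [Finset.mem_range] at hm
        rw [Set.indicator_apply]
        have hiff : ω ∈ EA m ↔ (Z m ω < z ∧ ∀ k < m, Z k ω < Z m ω) := by
          simp only [hEA, Set.mem_preimage, Set.mem_setOf_eq, AD.Aprop]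
          rw [hPSV ω n (le_refl n), hPSV ω m (by omega)]
          constructor
          · rintro ⟨_, h1, h2⟩
            exact ⟨h1, fun k hk => by
              have := h2 k hk
              rwa [hPSV ω k (by omega)] at this⟩
          · rintro ⟨h1, h2⟩
            exact ⟨hE, h1, fun k hk => by
              rw [hPSV ω k (by omega)]
              exact h2 k hk⟩
        rw [if_congr hiff.symm rfl rfl]
      · have hmem : ω ∉ {ω | Z n ω = z} := hE
        rw [Set.indicator_of_notMem hmem]
        symm
        refine Finset.sum_eq_zero (fun m hm => ?_)
        refine Set.indicator_of_notMem (fun hc => hE ?_) _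
        have : AD.Aprop n z m (V ω) := hc
        rw [← hPSV ω n (le_refl n)]
        exact this.1
    rw [hptwise]
    rw [MeasureTheory.integral_finset_sum _
      (fun m _ => (integrable_const (1 : ℝ)).indicator (hmeasSet _))]
    refine Finset.sum_congr rfl (fun m _ => ?_)
    rw [MeasureTheory.integral_indicator_const (1 : ℝ) (hmeasSet _), smul_eq_mul, mul_one, measureReal_def]
  -- finish
  have hBevent : {ω | Z n ω = z ∧ ∀ k, 1 ≤ k → k ≤ n → 0 < Z k ω} = EB := by
    ext ω
    simp only [Set.mem_setOf_eq, hEB, Set.mem_preimage, AD.Bprop]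
    rw [hPSV ω n (le_refl n)]
    constructor
    · rintro ⟨h1, h2⟩
      exact ⟨h1, fun k hk1 hk2 => by rw [hPSV ω k hk2]; exact h2 k hk1 hk2⟩
    · rintro ⟨h1, h2⟩
      exact ⟨h1, fun k hk1 hk2 => by rw [← hPSV ω k hk2]; exact h2 k hk1 hk2⟩
  rw [hBevent, hintrw]
  have hsum : ∑ m ∈ Finset.range n, (μ (EA m)).toReal
      = ((n : ENNReal) * μ EB).toReal := by
    rw [← key, ENNReal.toReal_sum (fun m _ => measure_ne_top μ _)]
  rw [hsum, ENNReal.toReal_mul, ENNReal.toReal_natCast]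
  have hne : (n : ℝ) ≠ 0 := by
    simp only [ne_eq, Nat.cast_eq_zero]
    omega
  field_simp
end

section
/- (First-minimum decomposition) For an integer random walk Z with Z_0 = w > 0 and 0 < w ≤ z, the probability u_n(w,z) = P_w(Z_n = z, Z_k > 0 for k=1,...,n) satisfies u_n(w,z) = u^0_n(z−w) + Σ_{m=0}^{n} Σ_{r=1}^{w−1} û_m(w−r) · u^0_{n−m}(z−r), where û_m(a) = P(Ẑ_m = a, Ẑ is at a strict new maximum at time m) for the reversed walk Ẑ, and u^0_k(a) = P(Z_k = a, Z_j ≥ 0 for j = 0,...,k). -/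
open MeasureTheory ProbabilityTheory

section AuxRW

variable {Ω : Type*} [MeasurableSpace Ω]

/-- walk staying `≥ 0` ending at `a` -/
def rwZeroSet (ξ : ℕ → Ω → ℤ) (a : ℤ) (k : ℕ) : Set Ω :=
  {ω | (∑ j ∈ Finset.range k, ξ j ω) = a ∧ ∀ i ≤ k, 0 ≤ ∑ j ∈ Finset.range i, ξ j ω}

/-- walk at a strict new minimum `b` at time `m` -/
def rwPreSet (ξ : ℕ → Ω → ℤ) (b : ℤ) (m : ℕ) : Set Ω :=
  {ω | (∑ k ∈ Finset.range m, ξ k ω) = b ∧ ∀ j < m, b < ∑ k ∈ Finset.range j, ξ k ω}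

/-- first minimum at time `m` with value `b`, end value `c`, horizon `n` -/
def rwASet (ξ : ℕ → Ω → ℤ) (b c : ℤ) (n m : ℕ) : Set Ω :=
  {ω | (∑ k ∈ Finset.range m, ξ k ω) = b
    ∧ (∀ j < m, b < ∑ k ∈ Finset.range j, ξ k ω)
    ∧ (∀ j, m ≤ j → j ≤ n → b ≤ ∑ k ∈ Finset.range j, ξ k ω)
    ∧ (∑ k ∈ Finset.range n, ξ k ω) = c}

variable (μ : Measure Ω) [IsProbabilityMeasure μ]
    (ξ : ℕ → Ω → ℤ) (hmeas : ∀ k, Measurable (ξ k))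
    (hindep : iIndepFun ξ μ)
    (hident : ∀ k, μ.map (ξ k) = μ.map (ξ 0))

include hmeas hindep hident in
/-- atom lemma -/
lemma rw_atom (m k : ℕ) (c : Fin k → ℤ) :
    μ (⋂ i : Fin k, ξ (m + ↑i) ⁻¹' {c i}) = ∏ i : Fin k, μ (ξ 0 ⁻¹' {c i}) := by
  classical
  have hsingle : ∀ j a, μ (ξ j ⁻¹' {a}) = μ (ξ 0 ⁻¹' {a}) := by
    intro j a
    rw [← Measure.map_apply (hmeas j) (measurableSet_singleton a), hident j,
      Measure.map_apply (hmeas 0) (measurableSet_singleton a)]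
  set e : Fin k ↪ ℕ := ⟨fun i => m + ↑i, by intro a b hab; simp only at hab; exact Fin.ext (by omega)⟩
  set d : ℕ → Set ℤ := fun j => if h : m ≤ j ∧ j - m < k then {c ⟨j - m, h.2⟩} else Set.univ with hd_def
  have hd : ∀ i : Fin k, d (m + ↑i) = {c i} := by
    intro i
    have h : m ≤ m + ↑i ∧ (m + ↑i) - m < k := ⟨Nat.le_add_right _ _, by omega⟩
    show (if h : m ≤ m + ↑i ∧ (m + ↑i) - m < k then ({c ⟨(m + ↑i) - m, h.2⟩} : Set ℤ)
        else Set.univ) = {c i}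
    rw [dif_pos h]
    have : (⟨m + ↑i - m, h.2⟩ : Fin k) = i := Fin.ext (by simp)
    rw [this]
  have key := hindep.measure_inter_preimage_eq_mul (S := Finset.map e Finset.univ)
    (sets := d) (fun i _ => MeasurableSet.of_discrete)
  rw [Finset.prod_map] at key
  have hIcap : (⋂ i : Fin k, ξ (m + ↑i) ⁻¹' {c i}) = ⋂ j ∈ Finset.map e Finset.univ, ξ j ⁻¹' d j := by
    ext ω
    simp only [Set.mem_iInter, Set.mem_preimage, Finset.mem_map, Finset.mem_univ, true_and]
    constructor
    · rintro h j ⟨i, rfl⟩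
      rw [show e i = m + ↑i from rfl, hd i]
      exact h i
    · intro h i
      have := h (m + ↑i) ⟨i, rfl⟩
      rwa [hd i] at this
  rw [hIcap, key]
  apply Finset.prod_congr rfl
  intro i _
  rw [show e i = m + ↑i from rfl, hd i, hsingle]

include hmeas hindep hident in
/-- shift invariance of the law of a block -/
lemma rw_shiftlaw (m k : ℕ) (C : Set (Fin k → ℤ)) :
    μ ((fun ω (i : Fin k) => ξ (m + ↑i) ω) ⁻¹' C)
      = μ ((fun ω (i : Fin k) => ξ ↑i ω) ⁻¹' C) := by
  classical
  have hYm : Measurable (fun ω (i : Fin k) => ξ (m + ↑i) ω) :=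
    measurable_pi_lambda _ fun i => hmeas _
  have hY0 : Measurable (fun ω (i : Fin k) => ξ (↑i : ℕ) ω) :=
    measurable_pi_lambda _ fun i => hmeas _
  have hpre : ∀ (m' : ℕ) (c : Fin k → ℤ),
      (fun ω (i : Fin k) => ξ (m' + ↑i) ω) ⁻¹' {c} = ⋂ i : Fin k, ξ (m' + ↑i) ⁻¹' {c i} := by
    intro m' c
    ext ω
    simp [funext_iff]
  have hmap : μ.map (fun ω (i : Fin k) => ξ (m + ↑i) ω)
      = μ.map (fun ω (i : Fin k) => ξ (↑i : ℕ) ω) := by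
    apply MeasureTheory.Measure.ext_of_singleton
    intro c
    rw [Measure.map_apply hYm (measurableSet_singleton c),
      Measure.map_apply hY0 (measurableSet_singleton c)]
    have h0 : (fun ω (i : Fin k) => ξ (↑i : ℕ) ω) ⁻¹' {c} = ⋂ i : Fin k, ξ (0 + ↑i) ⁻¹' {c i} := by
      simpa using hpre 0 c
    rw [hpre m c, h0, rw_atom μ ξ hmeas hindep hident m k c,
      rw_atom μ ξ hmeas hindep hident 0 k c]
  rw [← Measure.map_apply hYm MeasurableSet.of_discrete,
    ← Measure.map_apply hY0 MeasurableSet.of_discrete, hmap]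

include hmeas hindep hident in
/-- splitting at the first minimum: product formula -/
lemma rw_prod (b c : ℤ) (n m : ℕ) (hm : m ≤ n) :
    μ (rwASet ξ b c n m) = μ (rwPreSet ξ b m) * μ (rwZeroSet ξ (c - b) (n - m)) := by
  classical
  set k := n - m with hk
  have hmk : m + k = n := by omega
  set C₁ : Set (Fin m → ℤ) :=
    {x | (∑ t ∈ Finset.range m, (if h : t < m then x ⟨t, h⟩ else 0)) = b ∧
      ∀ j < m, b < ∑ t ∈ Finset.range j, (if h : t < m then x ⟨t, h⟩ else 0)} with hC₁
  set C₂ : Set (Fin k → ℤ) :=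
    {y | (∑ t ∈ Finset.range k, (if h : t < k then y ⟨t, h⟩ else 0)) = c - b ∧
      ∀ i ≤ k, 0 ≤ ∑ t ∈ Finset.range i, (if h : t < k then y ⟨t, h⟩ else 0)} with hC₂
  set X : Ω → (Fin m → ℤ) := fun ω i => ξ ↑i ω with hX_def
  set Y : Ω → (Fin k → ℤ) := fun ω i => ξ (m + ↑i) ω with hY_def
  have hsum1 : ∀ (ω : Ω) (j : ℕ), j ≤ m →
      (∑ t ∈ Finset.range j, (if h : t < m then X ω ⟨t, h⟩ else 0))
        = ∑ t ∈ Finset.range j, ξ t ω := by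
    intro ω j hj
    refine Finset.sum_congr rfl fun t ht => ?_
    rw [dif_pos (lt_of_lt_of_le (Finset.mem_range.1 ht) hj)]
  have hsum2 : ∀ (ω : Ω) (i : ℕ), i ≤ k →
      (∑ t ∈ Finset.range i, (if h : t < k then Y ω ⟨t, h⟩ else 0))
        = ∑ t ∈ Finset.range i, ξ (m + t) ω := by
    intro ω i hi
    refine Finset.sum_congr rfl fun t ht => ?_
    rw [dif_pos (lt_of_lt_of_le (Finset.mem_range.1 ht) hi)]
  have hXC : X ⁻¹' C₁ = rwPreSet ξ b m := by
    ext ω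
    simp only [Set.mem_preimage, hC₁, Set.mem_setOf_eq, rwPreSet]
    rw [hsum1 ω m le_rfl]
    constructor
    · rintro ⟨h1, h2⟩
      refine ⟨h1, fun j hj => ?_⟩
      have := h2 j hj
      rwa [hsum1 ω j hj.le] at this
    · rintro ⟨h1, h2⟩
      refine ⟨h1, fun j hj => ?_⟩
      rw [hsum1 ω j hj.le]
      exact h2 j hj
  have hYC : Y ⁻¹' C₂ = {ω | (∑ t ∈ Finset.range k, ξ (m + t) ω) = c - b ∧
      ∀ i ≤ k, 0 ≤ ∑ t ∈ Finset.range i, ξ (m + t) ω} := by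
    ext ω
    simp only [Set.mem_preimage, hC₂, Set.mem_setOf_eq]
    rw [hsum2 ω k le_rfl]
    constructor
    · rintro ⟨h1, h2⟩
      refine ⟨h1, fun i hi => ?_⟩
      have := h2 i hi
      rwa [hsum2 ω i hi] at this
    · rintro ⟨h1, h2⟩
      refine ⟨h1, fun i hi => ?_⟩
      rw [hsum2 ω i hi]
      exact h2 i hi
  have hsplit : rwASet ξ b c n m = (X ⁻¹' C₁) ∩ (Y ⁻¹' C₂) := by
    rw [hXC, hYC]
    ext ω
    simp only [rwASet, rwPreSet, Set.mem_setOf_eq, Set.mem_inter_iff]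
    constructor
    · rintro ⟨h1, h2, h3, h4⟩
      refine ⟨⟨h1, h2⟩, ?_, ?_⟩
      · have hadd := Finset.sum_range_add (fun t => ξ t ω) m k
        rw [hmk] at hadd
        omega
      · intro i hi
        have hadd := Finset.sum_range_add (fun t => ξ t ω) m i
        have := h3 (m + i) (Nat.le_add_right _ _) (by omega)
        omega
    · rintro ⟨⟨h1, h2⟩, h3, h4⟩
      refine ⟨h1, h2, ?_, ?_⟩
      · intro j hmj hjn
        have hadd := Finset.sum_range_add (fun t => ξ t ω) m (j - m)
        rw [show m + (j - m) = j by omega] at hadd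
        have := h4 (j - m) (by omega)
        omega
      · have hadd := Finset.sum_range_add (fun t => ξ t ω) m k
        rw [hmk] at hadd
        omega
  have hdisj : Disjoint (Finset.range m) (Finset.Ico m n) := by
    rw [Finset.disjoint_left]
    intro a ha hb
    rw [Finset.mem_range] at ha
    rw [Finset.mem_Ico] at hb
    omega
  have hbase := hindep.indepFun_finset (Finset.range m) (Finset.Ico m n) hdisj hmeas
  have hφ : Measurable (fun (x : {t // t ∈ Finset.range m} → ℤ) (i : Fin m) =>
      x ⟨↑i, Finset.mem_range.2 i.2⟩) :=
    measurable_pi_lambda _ fun i => measurable_pi_apply _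
  have hψ : Measurable (fun (y : {t // t ∈ Finset.Ico m n} → ℤ) (i : Fin k) =>
      y ⟨m + ↑i, Finset.mem_Ico.2 ⟨Nat.le_add_right _ _, by omega⟩⟩) :=
    measurable_pi_lambda _ fun i => measurable_pi_apply _
  have hXY : IndepFun X Y μ := hbase.comp hφ hψ
  rw [hsplit, hXY.measure_inter_preimage_eq_mul C₁ C₂ MeasurableSet.of_discrete
    MeasurableSet.of_discrete, hXC]
  congr 1
  have := rw_shiftlaw μ ξ hmeas hindep hident m k C₂
  rw [hY_def]
  rw [this]
  rw [show ((fun ω (i : Fin k) => ξ ↑i ω) ⁻¹' C₂) = rwZeroSet ξ (c - b) k from ?_]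
  · ext ω
    simp only [Set.mem_preimage, hC₂, Set.mem_setOf_eq, rwZeroSet]
    have hs0 : ∀ (i : ℕ), i ≤ k →
        (∑ t ∈ Finset.range i, (if h : t < k then ξ (↑(⟨t, h⟩ : Fin k)) ω else 0))
          = ∑ t ∈ Finset.range i, ξ t ω := by
      intro i hi
      refine Finset.sum_congr rfl fun t ht => ?_
      rw [dif_pos (lt_of_lt_of_le (Finset.mem_range.1 ht) hi)]
    rw [hs0 k le_rfl]
    constructor
    · rintro ⟨h1, h2⟩
      refine ⟨h1, fun i hi => ?_⟩
      have := h2 i hi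
      rwa [hs0 i hi] at this
    · rintro ⟨h1, h2⟩
      refine ⟨h1, fun i hi => ?_⟩
      rw [hs0 i hi]
      exact h2 i hi

end AuxRW

/-- First-minimum decomposition: for an integer random walk started at `w` with
`0 < w ≤ z`,
`u_n(w,z) = u⁰_n(z−w) + Σ_{m=0}^{n} Σ_{r=1}^{w−1} û_m(w−r) u⁰_{n−m}(z−r)`,
where `û_m(a)` is the probability that the reversed walk is at a strict new maximum `a`
at time `m`, and `u⁰_k(a)` the probability the walk (from `0`) stays `≥ 0` and ends at `a`. -/
theorem stmt16 {Ω : Type*} [MeasurableSpace Ω] (μ : Measure Ω) [IsProbabilityMeasure μ]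
    (ξ : ℕ → Ω → ℤ) (hmeas : ∀ k, Measurable (ξ k))
    (hindep : iIndepFun ξ μ)
    (hident : ∀ k, μ.map (ξ k) = μ.map (ξ 0))
    (w z : ℤ) (hw : 0 < w) (hwz : w ≤ z) (n : ℕ)
    (Z : ℕ → Ω → ℤ) (hZ : ∀ m ω, Z m ω = w + ∑ k ∈ Finset.range m, ξ k ω)
    (uhat : ℕ → ℤ → ℝ)
    (huhat : ∀ m a, uhat m a
        = (μ {ω | (∑ k ∈ Finset.range m, -ξ k ω) = a ∧
            ∀ j < m, (∑ k ∈ Finset.range j, -ξ k ω) < ∑ k ∈ Finset.range m, -ξ k ω}).toReal)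
    (u0 : ℕ → ℤ → ℝ)
    (hu0 : ∀ m a, u0 m a
        = (μ {ω | (∑ k ∈ Finset.range m, ξ k ω) = a ∧
            ∀ j ≤ m, 0 ≤ ∑ k ∈ Finset.range j, ξ k ω}).toReal) :
    (μ {ω | Z n ω = z ∧ ∀ k, 1 ≤ k → k ≤ n → 0 < Z k ω}).toReal
      = u0 n (z - w)
        + ∑ m ∈ Finset.range (n + 1), ∑ r ∈ Finset.Icc (1 : ℤ) (w - 1),
            uhat m (w - r) * u0 (n - m) (z - r) := by
  classical
  have hS : ∀ j, Measurable (fun ω => ∑ t ∈ Finset.range j, ξ t ω) :=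
    fun j => Finset.measurable_sum _ fun t _ => hmeas t
  have hEqm : ∀ (j : ℕ) (a : ℤ), MeasurableSet {ω | (∑ t ∈ Finset.range j, ξ t ω) = a} :=
    fun j a => hS j (measurableSet_singleton a)
  have hLe : ∀ (j : ℕ) (a : ℤ), MeasurableSet {ω | a ≤ ∑ t ∈ Finset.range j, ξ t ω} :=
    fun j a => hS j (MeasurableSet.of_discrete (s := Set.Ici a))
  have hLt : ∀ (j : ℕ) (a : ℤ), MeasurableSet {ω | a < ∑ t ∈ Finset.range j, ξ t ω} :=
    fun j a => hS j (MeasurableSet.of_discrete (s := Set.Ioi a))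
  have hmZero : ∀ (a : ℤ) (k : ℕ), MeasurableSet (rwZeroSet ξ a k) := by
    intro a k
    have heq : rwZeroSet ξ a k = {ω | (∑ j ∈ Finset.range k, ξ j ω) = a}
        ∩ ⋂ (i : ℕ), ⋂ (_ : i ≤ k), {ω | 0 ≤ ∑ j ∈ Finset.range i, ξ j ω} := by
      ext ω; simp [rwZeroSet]
    rw [heq]
    exact (hEqm k a).inter (MeasurableSet.iInter fun i => MeasurableSet.iInter fun _ => hLe i 0)
  have hmA : ∀ (b c : ℤ) (m : ℕ), MeasurableSet (rwASet ξ b c n m) := by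
    intro b c m
    have heq : rwASet ξ b c n m = {ω | (∑ k ∈ Finset.range m, ξ k ω) = b}
        ∩ ((⋂ (j : ℕ), ⋂ (_ : j < m), {ω | b < ∑ k ∈ Finset.range j, ξ k ω})
        ∩ ((⋂ (j : ℕ), ⋂ (_ : m ≤ j), ⋂ (_ : j ≤ n), {ω | b ≤ ∑ k ∈ Finset.range j, ξ k ω})
        ∩ {ω | (∑ k ∈ Finset.range n, ξ k ω) = c})) := by
      ext ω; simp [rwASet, and_assoc]
    rw [heq]
    exact (hEqm m b).inter
      ((MeasurableSet.iInter fun j => MeasurableSet.iInter fun _ => hLt j b).inter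
      ((MeasurableSet.iInter fun j => MeasurableSet.iInter fun _ =>
          MeasurableSet.iInter fun _ => hLe j b).inter (hEqm n c)))
  have hEset : {ω | Z n ω = z ∧ ∀ k, 1 ≤ k → k ≤ n → 0 < Z k ω}
      = {ω | (∑ t ∈ Finset.range n, ξ t ω) = z - w
          ∧ ∀ k, 1 ≤ k → k ≤ n → 0 < w + ∑ t ∈ Finset.range k, ξ t ω} := by
    ext ω
    simp only [Set.mem_setOf_eq, hZ]
    constructor
    · rintro ⟨h1, h2⟩; exact ⟨by omega, h2⟩
    · rintro ⟨h1, h2⟩; exact ⟨by omega, h2⟩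
  have hpart : {ω | (∑ t ∈ Finset.range n, ξ t ω) = z - w
          ∧ ∀ k, 1 ≤ k → k ≤ n → 0 < w + ∑ t ∈ Finset.range k, ξ t ω}
      = rwZeroSet ξ (z - w) n ∪ ⋃ m ∈ Finset.range (n + 1), ⋃ r ∈ Finset.Icc (1:ℤ) (w-1),
          rwASet ξ (r - w) (z - w) n m := by
    ext ω
    constructor
    · rintro ⟨h1, h2⟩
      by_cases hpos : ∀ j ≤ n, 0 ≤ ∑ t ∈ Finset.range j, ξ t ω
      · exact Or.inl ⟨h1, hpos⟩
      · push_neg at hpos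
        obtain ⟨j₀, hj₀n, hj₀⟩ := hpos
        have hex : ∃ m₁, m₁ ≤ n ∧ ∀ j ≤ n,
            (∑ t ∈ Finset.range m₁, ξ t ω) ≤ ∑ t ∈ Finset.range j, ξ t ω := by
          obtain ⟨m₁, hm₁, hmin⟩ := Finset.exists_min_image (Finset.range (n+1))
            (fun j => ∑ t ∈ Finset.range j, ξ t ω) ⟨0, by simp⟩
          rw [Finset.mem_range] at hm₁
          exact ⟨m₁, by omega, fun j hj => hmin j (Finset.mem_range.2 (by omega))⟩
        set m₁ := Nat.find hex with hm₁def
        have hPm := Nat.find_spec hex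
        rw [← hm₁def] at hPm
        have hstrict : ∀ j < m₁,
            (∑ t ∈ Finset.range m₁, ξ t ω) < ∑ t ∈ Finset.range j, ξ t ω := by
          intro j hj
          by_contra hcon
          push_neg at hcon
          exact Nat.find_min hex hj ⟨by omega, fun i hi => le_trans hcon (hPm.2 i hi)⟩
        have hneg : (∑ t ∈ Finset.range m₁, ξ t ω) < 0 := lt_of_le_of_lt (hPm.2 j₀ hj₀n) hj₀
        have hm₁0 : m₁ ≠ 0 := by
          intro h0
          rw [h0] at hneg
          simp at hneg
        have hr1 : 0 < w + ∑ t ∈ Finset.range m₁, ξ t ω := h2 m₁ (by omega) hPm.1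
        refine Or.inr ?_
        refine Set.mem_biUnion (Finset.mem_range.2 (by omega) : m₁ ∈ Finset.range (n+1)) ?_
        exact Set.mem_biUnion (t := fun r => rwASet ξ (r - w) (z - w) n m₁)
          (Finset.mem_Icc.2 ⟨by omega, by omega⟩ :
            (w + ∑ t ∈ Finset.range m₁, ξ t ω) ∈ Finset.Icc (1:ℤ) (w-1))
          ⟨by omega, fun j hj => by have := hstrict j hj; omega,
            fun j hmj hjn => by have := hPm.2 j hjn; omega, h1⟩
    · rintro (⟨h1, h2⟩ | hU)
      · exact ⟨h1, fun k hk1 hkn => by have := h2 k hkn; omega⟩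
      · simp only [Set.mem_iUnion] at hU
        obtain ⟨m, hm, r, hr, hA⟩ := hU
        rw [Finset.mem_range] at hm
        rw [Finset.mem_Icc] at hr
        obtain ⟨hA1, hA2, hA3, hA4⟩ := hA
        refine ⟨hA4, fun k hk1 hkn => ?_⟩
        rcases lt_or_ge k m with h | h
        · have := hA2 k h; omega
        · have := hA3 k h hkn; omega
  have hdisjA : ∀ (ω : Ω) (m m' : ℕ) (r r' : ℤ), m ≤ n → m' ≤ n →
      ω ∈ rwASet ξ (r - w) (z-w) n m → ω ∈ rwASet ξ (r' - w) (z-w) n m' → m = m' ∧ r = r' := by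
    intro ω m m' r r' hmn hm'n hA hA'
    rcases lt_trichotomy m m' with h | h | h
    · exfalso
      have h1 := hA'.2.1 m h
      have h2 := hA.2.2.1 m' (le_of_lt h) hm'n
      have h3 := hA.1
      have h4 := hA'.1
      omega
    · subst h
      have h3 := hA.1
      have h4 := hA'.1
      exact ⟨rfl, by omega⟩
    · exfalso
      have h1 := hA.2.1 m' h
      have h2 := hA'.2.2.1 m (le_of_lt h) hmn
      have h3 := hA.1
      have h4 := hA'.1
      omega
  have hdisjTop : Disjoint (rwZeroSet ξ (z-w) n)
      (⋃ m ∈ Finset.range (n + 1), ⋃ r ∈ Finset.Icc (1:ℤ) (w-1),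
        rwASet ξ (r - w) (z - w) n m) := by
    rw [Set.disjoint_left]
    intro ω hω hU
    simp only [Set.mem_iUnion] at hU
    obtain ⟨m, hm, r, hr, hA⟩ := hU
    rw [Finset.mem_range] at hm
    rw [Finset.mem_Icc] at hr
    have h0 := hω.2 m (by omega)
    have h1 := hA.1
    omega
  have hμU : μ (⋃ m ∈ Finset.range (n+1), ⋃ r ∈ Finset.Icc (1:ℤ) (w-1),
        rwASet ξ (r-w) (z-w) n m)
      = ∑ m ∈ Finset.range (n+1), ∑ r ∈ Finset.Icc (1:ℤ) (w-1),
          μ (rwASet ξ (r-w) (z-w) n m) := by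
    have houter : (↑(Finset.range (n+1)) : Set ℕ).PairwiseDisjoint
        (fun m => ⋃ r ∈ Finset.Icc (1:ℤ) (w-1), rwASet ξ (r-w) (z-w) n m) := by
      intro m hm m' hm' hne
      rw [Finset.mem_coe, Finset.mem_range] at hm hm'
      rw [Function.onFun]
      rw [Set.disjoint_left]
      intro ω hω hω'
      simp only [Set.mem_iUnion] at hω hω'
      obtain ⟨r, hr, hA⟩ := hω
      obtain ⟨r', hr', hA'⟩ := hω'
      exact hne (hdisjA ω m m' r r' (by omega) (by omega) hA hA').1
    rw [measure_biUnion_finset houter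
      (fun m _ => Finset.measurableSet_biUnion _ fun r _ => hmA _ _ _)]
    refine Finset.sum_congr rfl fun m hm => ?_
    rw [Finset.mem_range] at hm
    have hinner : (↑(Finset.Icc (1:ℤ) (w-1)) : Set ℤ).PairwiseDisjoint
        (fun r => rwASet ξ (r-w) (z-w) n m) := by
      intro r hr r' hr' hne
      rw [Function.onFun]
      rw [Set.disjoint_left]
      intro ω hω hω'
      exact hne (hdisjA ω m m r r' (by omega) (by omega) hω hω').2
    rw [measure_biUnion_finset hinner (fun r _ => hmA _ _ _)]
  have hmain : μ {ω | Z n ω = z ∧ ∀ k, 1 ≤ k → k ≤ n → 0 < Z k ω}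
      = μ (rwZeroSet ξ (z-w) n) + ∑ m ∈ Finset.range (n+1), ∑ r ∈ Finset.Icc (1:ℤ) (w-1),
          μ (rwPreSet ξ (r-w) m) * μ (rwZeroSet ξ (z-r) (n-m)) := by
    rw [hEset, hpart, measure_union hdisjTop
      (Finset.measurableSet_biUnion _ fun m _ =>
        Finset.measurableSet_biUnion _ fun r _ => hmA _ _ _), hμU]
    congr 1
    refine Finset.sum_congr rfl fun m hm => Finset.sum_congr rfl fun r _ => ?_
    rw [Finset.mem_range] at hm
    rw [rw_prod μ ξ hmeas hindep hident (r-w) (z-w) n m (by omega)]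
    rw [show z - w - (r - w) = z - r by ring]
  rw [hmain]
  have hne2 : (∑ m ∈ Finset.range (n+1), ∑ r ∈ Finset.Icc (1:ℤ) (w-1),
      μ (rwPreSet ξ (r-w) m) * μ (rwZeroSet ξ (z-r) (n-m))) ≠ ⊤ := by
    refine ne_of_lt ?_
    refine ENNReal.sum_lt_top.2 fun m _ => ?_
    refine ENNReal.sum_lt_top.2 fun r _ => ?_
    exact ENNReal.mul_lt_top (measure_lt_top _ _) (measure_lt_top _ _)
  rw [ENNReal.toReal_add (measure_ne_top _ _) hne2]
  congr 1
  · rw [hu0 n (z-w)]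
    rfl
  · rw [ENNReal.toReal_sum (fun m _ => ne_of_lt (ENNReal.sum_lt_top.2 fun r _ =>
      ENNReal.mul_lt_top (measure_lt_top _ _) (measure_lt_top _ _)))]
    refine Finset.sum_congr rfl fun m _ => ?_
    rw [ENNReal.toReal_sum (fun r _ => ne_of_lt
      (ENNReal.mul_lt_top (measure_lt_top _ _) (measure_lt_top _ _)))]
    refine Finset.sum_congr rfl fun r _ => ?_
    rw [ENNReal.toReal_mul]
    congr 1
    · rw [huhat m (w-r)]
      have hset : {ω | (∑ k ∈ Finset.range m, -ξ k ω) = w - r ∧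
          ∀ j < m, (∑ k ∈ Finset.range j, -ξ k ω) < ∑ k ∈ Finset.range m, -ξ k ω}
          = rwPreSet ξ (r-w) m := by
        ext ω
        simp only [Set.mem_setOf_eq, rwPreSet, Finset.sum_neg_distrib]
        constructor
        · rintro ⟨h1, h2⟩
          refine ⟨by omega, fun j hj => ?_⟩
          have := h2 j hj; omega
        · rintro ⟨h1, h2⟩
          refine ⟨by omega, fun j hj => ?_⟩
          have := h2 j hj; omega
      rw [hset]
    · rw [hu0 (n-m) (z-r)]
      rfl
end
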